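/- For angles 0 = c_1 ≤ c_2 ≤ ... ≤ c_n < π and nonnegative reals p_1, ..., p_n summing to 1, the line segment from the origin to the point ∑_i p_i e^{ic_i} intersects the line segment joining 1 and e^{ic_n}; equivalently, there exist r ∈ [0,1] and x ∈ [0,1] with r ∑_i p_i e^{ic_i} = x + (1-x) e^{ic_n}. -/

import Mathlib

open Real Finset

theorem stmt_7 {n : ℕ} (c : Fin (n + 1) → ℝ) (hmono : Monotone c) (h0 : c 0 = 0)
    (hπ : c (Fin.last n) < Real.pi) (p : Fin (n + 1) → ℝ) (hp : ∀ i, 0 ≤ p i)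
    (hsum : ∑ i, p i = 1) :
    ∃ r x : ℝ, r ∈ Set.Icc (0 : ℝ) 1 ∧ x ∈ Set.Icc (0 : ℝ) 1 ∧
      (r : ℂ) * ∑ i, (p i : ℂ) * Complex.exp ((c i : ℂ) * Complex.I) =
        (x : ℂ) + (1 - (x : ℂ)) * Complex.exp ((c (Fin.last n) : ℂ) * Complex.I) := by
  set θ := c (Fin.last n) with hθdef
  have hθ0 : 0 ≤ θ := h0 ▸ hmono (Fin.zero_le _)
  have hci0 : ∀ i, 0 ≤ c i := fun i => h0 ▸ hmono (Fin.zero_le i)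
  have hciθ : ∀ i, c i ≤ θ := fun i => hmono (Fin.le_last i)
  rcases eq_or_lt_of_le hθ0 with hθ | hθ
  · -- θ = 0
    have hci : ∀ i, c i = 0 := fun i => le_antisymm (hθ ▸ hciθ i) (hci0 i)
    refine ⟨1, 1, by norm_num, by norm_num, ?_⟩
    have : ∑ i, (p i : ℂ) * Complex.exp ((c i : ℂ) * Complex.I) = 1 := by
      simp only [hci]
      push_cast
      simp only [Complex.ofReal_zero, zero_mul, Complex.exp_zero, mul_one]
      rw [← Complex.ofReal_sum]
      · push_cast [hsum]; norm_num
    rw [this, ← hθ]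
    norm_num
  · -- θ > 0
    have hs : 0 < Real.sin (θ/2) := Real.sin_pos_of_pos_of_lt_pi (by linarith) (by linarith)
    have hcθ : 0 < Real.cos (θ/2) := Real.cos_pos_of_mem_Ioo ⟨by linarith [Real.pi_pos], by linarith⟩
    set s := Real.sin (θ/2) with hsdef
    set ct := Real.cos (θ/2) with hctdef
    have hpyth : ct^2 + s^2 = 1 := by
      rw [hctdef, hsdef]; rw [add_comm]; exact Real.sin_sq_add_cos_sq _
    set A := ∑ i, p i * Real.cos (c i - θ/2) with hAdef
    set B := ∑ i, p i * Real.sin (c i - θ/2) with hBdef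
    have habs : ∀ i, |c i - θ/2| ≤ θ/2 := by
      intro i; rw [abs_le]; constructor <;> [linarith [hci0 i]; linarith [hciθ i]]
    have hcosge : ∀ i, ct ≤ Real.cos (c i - θ/2) := by
      intro i
      rw [← Real.cos_abs]
      exact Real.cos_le_cos_of_nonneg_of_le_pi (abs_nonneg _) (by linarith) (habs i)
    have hsinle : ∀ i, |Real.sin (c i - θ/2)| ≤ s := by
      intro i
      rw [abs_le]
      constructor
      · have h1 := abs_le.mp (habs i)
        rw [← Real.sin_neg]
        exact Real.sin_le_sin_of_le_of_le_pi_div_two (by linarith) (by linarith) (by linarith)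
      · have h1 := abs_le.mp (habs i)
        exact Real.sin_le_sin_of_le_of_le_pi_div_two (by linarith) (by linarith) (by linarith)
    have hA : ct ≤ A := by
      calc ct = ∑ i, p i * ct := by rw [← Finset.sum_mul, hsum, one_mul]
        _ ≤ A := Finset.sum_le_sum fun i _ => mul_le_mul_of_nonneg_left (hcosge i) (hp i)
    have hApos : 0 < A := lt_of_lt_of_le hcθ hA
    have hBabs : |B| ≤ s := by
      calc |B| ≤ ∑ i, |p i * Real.sin (c i - θ/2)| := Finset.abs_sum_le_sum_abs _ _
        _ ≤ ∑ i, p i * s := by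
            refine Finset.sum_le_sum fun i _ => ?_
            rw [abs_mul, abs_of_nonneg (hp i)]
            exact mul_le_mul_of_nonneg_left (hsinle i) (hp i)
        _ = s := by rw [← Finset.sum_mul, hsum, one_mul]
    set r := ct / A with hrdef
    set x := (1 - r * B / s) / 2 with hxdef
    have hrA : r * A = ct := by rw [hrdef, div_mul_cancel₀ _ (ne_of_gt hApos)]
    have hr0 : 0 ≤ r := le_of_lt (div_pos hcθ hApos)
    have hr1 : r ≤ 1 := by rw [hrdef, div_le_one hApos]; exact hA
    have hrBs : |r * B| ≤ s := by
      rw [abs_mul, abs_of_nonneg hr0]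
      calc r * |B| ≤ 1 * s := mul_le_mul hr1 hBabs (abs_nonneg _) zero_le_one
        _ = s := one_mul s
    have hx0 : 0 ≤ x := by
      have := abs_le.mp hrBs
      have hdiv : r * B / s ≤ 1 := by rw [div_le_one hs]; linarith
      rw [hxdef]; linarith
    have hx1 : x ≤ 1 := by
      have := abs_le.mp hrBs
      have hdiv : -1 ≤ r * B / s := by rw [le_div_iff₀ hs]; linarith
      rw [hxdef]; linarith
    refine ⟨r, x, ⟨hr0, hr1⟩, ⟨hx0, hx1⟩, ?_⟩
    set Cr := ∑ i, p i * Real.cos (c i) with hCrdef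
    set Ci := ∑ i, p i * Real.sin (c i) with hCidef
    have hz : ∑ i, (p i : ℂ) * Complex.exp ((c i : ℂ) * Complex.I)
        = (Cr : ℂ) + (Ci : ℂ) * Complex.I := by
      rw [hCrdef, hCidef]
      push_cast
      rw [Finset.sum_mul, ← Finset.sum_add_distrib]
      refine Finset.sum_congr rfl fun i _ => ?_
      rw [Complex.exp_mul_I]
      ring
    have hCr : Cr = A * ct - B * s := by
      rw [hCrdef, hAdef, hBdef, Finset.sum_mul, Finset.sum_mul, ← Finset.sum_sub_distrib]
      refine Finset.sum_congr rfl fun i _ => ?_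
      rw [Real.cos_sub, Real.sin_sub]
      linear_combination (-(p i * Real.cos (c i))) * hpyth
    have hCi : Ci = A * s + B * ct := by
      rw [hCidef, hAdef, hBdef, Finset.sum_mul, Finset.sum_mul, ← Finset.sum_add_distrib]
      refine Finset.sum_congr rfl fun i _ => ?_
      rw [Real.cos_sub, Real.sin_sub]
      linear_combination (-(p i * Real.sin (c i))) * hpyth
    have hcosθ : Real.cos θ = ct^2 - s^2 := by
      rw [show θ = 2 * (θ/2) by ring, Real.cos_two_mul]
      nlinarith [hpyth]
    have hsinθ : Real.sin θ = 2 * s * ct := by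
      rw [show θ = 2 * (θ/2) by ring, Real.sin_two_mul]
    rw [hz, Complex.exp_mul_I, ← Complex.ofReal_cos, ← Complex.ofReal_sin, hcosθ, hsinθ]
    have hre : r * Cr = x + (1 - x) * (ct^2 - s^2) := by
      rw [hCr, hxdef]
      field_simp
      linear_combination (2*s*ct) * hrA + (s - r*B) * hpyth
    have him : r * Ci = (1 - x) * (2 * s * ct) := by
      rw [hCi, hxdef]
      field_simp
      linear_combination s * hrA
    have hreC : (r:ℂ) * (Cr:ℂ) = (x:ℂ) + (1 - (x:ℂ)) * ((ct:ℂ)^2 - (s:ℂ)^2) := by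
      exact_mod_cast hre
    have himC : (r:ℂ) * (Ci:ℂ) = (1 - (x:ℂ)) * (2 * (s:ℂ) * (ct:ℂ)) := by
      exact_mod_cast him
    push_cast
    linear_combination hreC + Complex.I * himC
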